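/- Let p ≥ 1 be an integer, λ ∈ {−1, 1}, and Δt > 0. Let u and v be Schwartz functions on ℝ², set m = (u + v)/2, and define W(x,y) = ∫_{−∞}^{x} ∂²_y m(s,y) ds. If for all (x,y) ∈ ℝ² the Sanz–Serna time-discretization of the generalized KP equation holds, i.e. (v(x,y) − u(x,y))/Δt + ∂³_x m(x,y) + (1/(p+1)) ∂_x (m^{p+1})(x,y) + λ W(x,y) = 0, then the mean is conserved: ∫_{ℝ²} v(x,y) dx dy = ∫_{ℝ²} u(x,y) dx dy. -/

import Mathlib

open MeasureTheory

namespace SanzSernaAux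

/-- Every Schwartz map has temperate growth. -/
lemma schwartz_hasTemperateGrowth {E F : Type*} [NormedAddCommGroup E] [NormedSpace ℝ E]
    [NormedAddCommGroup F] [NormedSpace ℝ F] (f : SchwartzMap E F) :
    Function.HasTemperateGrowth f := by
  refine ⟨f.smooth', fun n => ?_⟩
  obtain ⟨C, hC⟩ := f.decay 0 n
  exact ⟨0, C, fun x => by simpa using hC.2 x⟩

lemma tg_sliceX (y : ℝ) : Function.HasTemperateGrowth (fun x : ℝ => ((x, y) : ℝ × ℝ)) := by
  apply Function.HasTemperateGrowth.of_fderiv (k := 1) (C := 1 + ‖y‖)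
    (f := fun x : ℝ => ((x, y) : ℝ × ℝ))
  · have : (fderiv ℝ (fun x : ℝ => ((x, y) : ℝ × ℝ)))
        = fun _ => ((ContinuousLinearMap.id ℝ ℝ).prod (0 : ℝ →L[ℝ] ℝ)) := by
      funext x
      exact ((hasFDerivAt_id x).prodMk (hasFDerivAt_const y x)).fderiv
    rw [this]
    exact Function.HasTemperateGrowth.const _
  · exact (differentiable_id.prodMk (differentiable_const y))
  · intro x
    have h1 : ‖((x, y) : ℝ × ℝ)‖ ≤ ‖x‖ + ‖y‖ := by
      rw [Prod.norm_def]
      exact max_le (le_add_of_nonneg_right (norm_nonneg _))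
        (le_add_of_nonneg_left (norm_nonneg _))
    have h2 : ‖x‖ + ‖y‖ ≤ (1 + ‖y‖) * (1 + ‖x‖) ^ 1 := by
      have hx : (0:ℝ) ≤ ‖x‖ := norm_nonneg _
      have hy : (0:ℝ) ≤ ‖y‖ := norm_nonneg _
      nlinarith
    exact h1.trans h2

lemma tg_sliceY (x : ℝ) : Function.HasTemperateGrowth (fun y : ℝ => ((x, y) : ℝ × ℝ)) := by
  apply Function.HasTemperateGrowth.of_fderiv (k := 1) (C := 1 + ‖x‖)
    (f := fun y : ℝ => ((x, y) : ℝ × ℝ))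
  · have : (fderiv ℝ (fun y : ℝ => ((x, y) : ℝ × ℝ)))
        = fun _ => ((0 : ℝ →L[ℝ] ℝ).prod (ContinuousLinearMap.id ℝ ℝ)) := by
      funext y
      exact ((hasFDerivAt_const x y).prodMk (hasFDerivAt_id y)).fderiv
    rw [this]
    exact Function.HasTemperateGrowth.const _
  · exact (differentiable_const x).prodMk differentiable_id
  · intro y
    have h1 : ‖((x, y) : ℝ × ℝ)‖ ≤ ‖x‖ + ‖y‖ := by
      rw [Prod.norm_def]
      exact max_le (le_add_of_nonneg_right (norm_nonneg _))
        (le_add_of_nonneg_left (norm_nonneg _))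
    have h2 : ‖x‖ + ‖y‖ ≤ (1 + ‖x‖) * (1 + ‖y‖) ^ 1 := by
      have hx : (0:ℝ) ≤ ‖x‖ := norm_nonneg _
      have hy : (0:ℝ) ≤ ‖y‖ := norm_nonneg _
      nlinarith
    exact h1.trans h2

/-- Horizontal slice of a Schwartz map on `ℝ × ℝ`. -/
noncomputable def sliceX (F : SchwartzMap (ℝ × ℝ) ℝ) (y : ℝ) : SchwartzMap ℝ ℝ :=
  SchwartzMap.compCLM (𝕜 := ℝ) (tg_sliceX y)
    ⟨1, 1, fun x => by
      have : ‖x‖ ≤ ‖((x, y) : ℝ × ℝ)‖ := by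
        rw [Prod.norm_def]; exact le_max_left _ _
      nlinarith [norm_nonneg ((x, y) : ℝ × ℝ), norm_nonneg x]⟩ F

@[simp] lemma sliceX_apply (F : SchwartzMap (ℝ × ℝ) ℝ) (y x : ℝ) :
    sliceX F y x = F (x, y) := rfl

/-- Vertical slice of a Schwartz map on `ℝ × ℝ`. -/
noncomputable def sliceY (F : SchwartzMap (ℝ × ℝ) ℝ) (x : ℝ) : SchwartzMap ℝ ℝ :=
  SchwartzMap.compCLM (𝕜 := ℝ) (tg_sliceY x)
    ⟨1, 1, fun y => by
      have : ‖y‖ ≤ ‖((x, y) : ℝ × ℝ)‖ := by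
        rw [Prod.norm_def]; exact le_max_right _ _
      nlinarith [norm_nonneg ((x, y) : ℝ × ℝ), norm_nonneg y]⟩ F

@[simp] lemma sliceY_apply (F : SchwartzMap (ℝ × ℝ) ℝ) (x y : ℝ) :
    sliceY F x y = F (x, y) := rfl

noncomputable def Dx : SchwartzMap (ℝ × ℝ) ℝ →L[ℝ] SchwartzMap (ℝ × ℝ) ℝ :=
  LineDeriv.lineDerivOpCLM ℝ (SchwartzMap (ℝ × ℝ) ℝ) ((1 : ℝ), (0 : ℝ))

noncomputable def Dy : SchwartzMap (ℝ × ℝ) ℝ →L[ℝ] SchwartzMap (ℝ × ℝ) ℝ :=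
  LineDeriv.lineDerivOpCLM ℝ (SchwartzMap (ℝ × ℝ) ℝ) ((0 : ℝ), (1 : ℝ))

lemma derivX (F : SchwartzMap (ℝ × ℝ) ℝ) (y x : ℝ) :
    deriv (fun x' => F (x', y)) x = Dx F (x, y) := by
  have h1 : HasDerivAt (fun x' : ℝ => ((x', y) : ℝ × ℝ)) ((1 : ℝ), (0 : ℝ)) x :=
    (hasDerivAt_id x).prodMk (hasDerivAt_const x y)
  have h2 : HasDerivAt (fun x' => F (x', y)) (fderiv ℝ F (x, y) (1, 0)) x :=
    (F.differentiableAt.hasFDerivAt).comp_hasDerivAt x h1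
  rw [h2.deriv]; rfl

lemma derivY (F : SchwartzMap (ℝ × ℝ) ℝ) (x y : ℝ) :
    deriv (fun y' => F (x, y')) y = Dy F (x, y) := by
  have h1 : HasDerivAt (fun y' : ℝ => ((x, y') : ℝ × ℝ)) ((0 : ℝ), (1 : ℝ)) y :=
    (hasDerivAt_const y x).prodMk (hasDerivAt_id y)
  have h2 : HasDerivAt (fun y' => F (x, y')) (fderiv ℝ F (x, y) (0, 1)) y :=
    (F.differentiableAt.hasFDerivAt).comp_hasDerivAt y h1
  rw [h2.deriv]; rfl

lemma derivX_funext (F : SchwartzMap (ℝ × ℝ) ℝ) (y : ℝ) :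
    deriv (fun x' => F (x', y)) = fun x' => Dx F (x', y) :=
  funext fun x => derivX F y x

lemma derivY_funext (F : SchwartzMap (ℝ × ℝ) ℝ) (x : ℝ) :
    deriv (fun y' => F (x, y')) = fun y' => Dy F (x, y') :=
  funext fun y => derivY F x y

/-- Integral of a derivative of a 1D Schwartz function vanishes. -/
lemma integral_deriv_schwartz (f : SchwartzMap ℝ ℝ) : (∫ x : ℝ, deriv f x) = 0 := by
  refine integral_eq_zero_of_hasDerivAt_of_integrable
    (fun x => f.differentiableAt.hasDerivAt) ?_ f.integrable
  rw [show (deriv ⇑f) = ⇑(SchwartzMap.derivCLM ℝ ℝ f) from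
    funext fun x => (SchwartzMap.derivCLM_apply ℝ f x).symm]
  exact (SchwartzMap.derivCLM ℝ ℝ f).integrable

/-- The integral of an `x`-partial derivative of a 2D Schwartz map vanishes. -/
lemma integral_Dx (F : SchwartzMap (ℝ × ℝ) ℝ) : (∫ q : ℝ × ℝ, Dx F q) = 0 := by
  have hint : Integrable (⇑(Dx F)) ((volume : Measure ℝ).prod volume) := by
    rw [← Measure.volume_eq_prod ℝ ℝ]; exact (Dx F).integrable
  calc (∫ q : ℝ × ℝ, Dx F q)
      = ∫ x : ℝ, ∫ y : ℝ, Dx F (x, y) := by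
        rw [Measure.volume_eq_prod ℝ ℝ]; exact integral_prod _ hint
    _ = ∫ y : ℝ, ∫ x : ℝ, Dx F (x, y) := by
        exact integral_integral_swap hint
    _ = ∫ y : ℝ, ∫ x : ℝ, deriv (sliceX F y) x := by
        congr 1; funext y; congr 1; funext x
        rw [show deriv (sliceX F y) x = deriv (fun x' => F (x', y)) x from rfl, derivX]
    _ = 0 := by simp [integral_deriv_schwartz]

lemma integral_y_Dy (F : SchwartzMap (ℝ × ℝ) ℝ) (s : ℝ) :
    (∫ y : ℝ, Dy F (s, y)) = 0 := by
  have : (fun y => Dy F (s, y)) = fun y => deriv (sliceY F s) y := by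
    funext y
    rw [show deriv (sliceY F s) y = deriv (fun y' => F (s, y')) y from rfl, derivY]
  rw [this]
  exact integral_deriv_schwartz (sliceY F s)

end SanzSernaAux

open SanzSernaAux

/-- The Sanz–Serna time discretization of the generalized KP equation
conserves the mean: if `u` (playing the role of `uₙ`) and `v` (playing the
role of `uₙ₊₁`) are Schwartz functions on `ℝ²` satisfying the scheme, then
`∫ v = ∫ u`. -/
theorem sanz_serna_conserves_mean
    (p : ℕ) (hp : 1 ≤ p) (lam : ℝ) (hlam : lam = -1 ∨ lam = 1)
    (Δt : ℝ) (hΔt : 0 < Δt)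
    (u v : SchwartzMap (ℝ × ℝ) ℝ)
    (m : ℝ → ℝ → ℝ) (hm : ∀ x y : ℝ, m x y = (u (x, y) + v (x, y)) / 2)
    (W : ℝ → ℝ → ℝ)
    (hW : ∀ x y : ℝ,
      W x y = ∫ s in Set.Iic x, iteratedDeriv 2 (fun y' => m s y') y)
    (hscheme : ∀ x y : ℝ,
      (v (x, y) - u (x, y)) / Δt
        + iteratedDeriv 3 (fun x' => m x' y) x
        + (1 / ((p : ℝ) + 1)) * deriv (fun x' => (m x' y) ^ (p + 1)) x
        + lam * W x y = 0) :
    (∫ q : ℝ × ℝ, v q) = ∫ q : ℝ × ℝ, u q := by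
  classical
  have hlam2 : lam * lam = 1 := by rcases hlam with h | h <;> simp [h]
  have hlamne : lam ≠ 0 := by rcases hlam with h | h <;> simp [h]
  -- the mean function as a Schwartz map
  set M : SchwartzMap (ℝ × ℝ) ℝ := (2 : ℝ)⁻¹ • (u + v) with hM
  have hMapp : ∀ x y : ℝ, m x y = M (x, y) := by
    intro x y
    rw [hm]
    simp [hM, SchwartzMap.smul_apply]
    ring
  -- the (p+1)-st power of M as a Schwartz map
  have hpow : ∀ n : ℕ, ∃ G : SchwartzMap (ℝ × ℝ) ℝ, ∀ q : ℝ × ℝ, G q = (M q) ^ (n + 1) := by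
    intro n
    induction n with
    | zero => exact ⟨M, fun q => (pow_one _).symm⟩
    | succ k ih =>
        obtain ⟨G, hG⟩ := ih
        refine ⟨SchwartzMap.bilinLeftCLM (ContinuousLinearMap.mul ℝ ℝ)
          (schwartz_hasTemperateGrowth M) G, fun q => ?_⟩
        have : SchwartzMap.bilinLeftCLM (ContinuousLinearMap.mul ℝ ℝ)
            (schwartz_hasTemperateGrowth M) G q = G q * M q := rfl
        rw [this, hG]
        ring
  obtain ⟨G, hG⟩ := hpow p
  -- identify the terms of the scheme with Schwartz maps
  have hiter3 : ∀ x y : ℝ,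
      iteratedDeriv 3 (fun x' => m x' y) x = Dx (Dx (Dx M)) (x, y) := by
    intro x y
    have hfun : (fun x' => m x' y) = fun x' => M (x', y) := funext fun x' => hMapp x' y
    rw [hfun]
    rw [show (3 : ℕ) = 2 + 1 from rfl, iteratedDeriv_succ,
      show (2 : ℕ) = 1 + 1 from rfl, iteratedDeriv_succ, iteratedDeriv_one,
      derivX_funext M y, derivX_funext (Dx M) y, derivX (Dx (Dx M)) y x]
  have hpowderiv : ∀ x y : ℝ,
      deriv (fun x' => (m x' y) ^ (p + 1)) x = Dx G (x, y) := by
    intro x y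
    have hfun : (fun x' => (m x' y) ^ (p + 1)) = fun x' => G (x', y) := by
      funext x'
      rw [hMapp, hG]
    rw [hfun, derivX]
  have hiter2 : ∀ s y : ℝ,
      iteratedDeriv 2 (fun y' => m s y') y = Dy (Dy M) (s, y) := by
    intro s y
    have hfun : (fun y' => m s y') = fun y' => M (s, y') := funext fun y' => hMapp s y'
    rw [hfun]
    rw [show (2 : ℕ) = 1 + 1 from rfl, iteratedDeriv_succ, iteratedDeriv_one,
      derivY_funext M s, derivY (Dy M) s y]
  -- the Schwartz map `T` such that `W = -lam • T` pointwise
  set T : SchwartzMap (ℝ × ℝ) ℝ :=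
    Δt⁻¹ • (v - u) + Dx (Dx (Dx M)) + (((p : ℝ) + 1)⁻¹) • Dx G with hT
  have hTapp : ∀ q : ℝ × ℝ,
      T q = (v q - u q) / Δt + iteratedDeriv 3 (fun x' => m x' q.2) q.1
        + (1 / ((p : ℝ) + 1)) * deriv (fun x' => (m x' q.2) ^ (p + 1)) q.1 := by
    rintro ⟨x, y⟩
    have := hiter3 x y
    have := hpowderiv x y
    simp only [hT, SchwartzMap.add_apply, SchwartzMap.smul_apply, SchwartzMap.sub_apply,
      smul_eq_mul]
    rw [hiter3 x y, hpowderiv x y]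
    ring
  have hWT : ∀ x y : ℝ, W x y = -lam * T (x, y) := by
    intro x y
    have h := hscheme x y
    rw [← hTapp (x, y)] at h
    have : lam * W x y = -T (x, y) := by linarith
    have h2 := congrArg (fun t => lam * t) this
    rw [← mul_assoc, hlam2, one_mul] at h2
    rw [h2]; ring
  -- `∫ W = 0` by Fubini and the fundamental theorem of calculus in `y`
  have hWy : ∀ x : ℝ, (∫ y : ℝ, W x y) = 0 := by
    intro x
    have hWint : ∀ y : ℝ, W x y = ∫ s in Set.Iic x, Dy (Dy M) (s, y) := by
      intro y
      rw [hW]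
      congr 1; funext s; exact hiter2 s y
    calc (∫ y : ℝ, W x y) = ∫ y : ℝ, ∫ s in Set.Iic x, Dy (Dy M) (s, y) := by
          congr 1; funext y; exact hWint y
      _ = ∫ s in Set.Iic x, ∫ y : ℝ, Dy (Dy M) (s, y) := by
          apply integral_integral_swap
          have h1 : Integrable (fun z : ℝ × ℝ => Dy (Dy M) (z.2, z.1))
              ((volume : Measure ℝ).prod volume) := by
            have := (Dy (Dy M)).integrable (μ := (volume : Measure (ℝ × ℝ)))
            rw [Measure.volume_eq_prod ℝ ℝ] at this
            exact this.swap
          have h2 : (volume : Measure ℝ).prod (volume.restrict (Set.Iic x))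
              = ((volume : Measure ℝ).prod volume).restrict (Set.univ ×ˢ Set.Iic x) := by
            rw [← Measure.prod_restrict, Measure.restrict_univ]
          unfold Function.uncurry
          rw [h2]
          exact h1.restrict
      _ = ∫ s in Set.Iic x, (0 : ℝ) := by
          apply integral_congr_ae
          filter_upwards with s
          exact integral_y_Dy (Dy M) s
      _ = 0 := by simp
  have hWfun : (fun q : ℝ × ℝ => W q.1 q.2) = fun q => -lam * T q := by
    funext q; exact hWT q.1 q.2
  have hWint2 : Integrable (fun q : ℝ × ℝ => W q.1 q.2) := by
    rw [hWfun]
    exact T.integrable.const_mul _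
  have hintW : (∫ q : ℝ × ℝ, W q.1 q.2) = 0 := by
    rw [Measure.volume_eq_prod ℝ ℝ]
    rw [Measure.volume_eq_prod ℝ ℝ] at hWint2
    rw [integral_prod _ hWint2]
    simp [hWy]
  -- hence `∫ T = 0`
  have hintT : (∫ q : ℝ × ℝ, T q) = 0 := by
    have : (∫ q : ℝ × ℝ, W q.1 q.2) = -lam * ∫ q : ℝ × ℝ, T q := by
      rw [hWfun, integral_const_mul]
    rw [this] at hintW
    rcases mul_eq_zero.1 hintW with h | h
    · exact absurd h (by simpa using hlamne)
    · exact h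
  -- split `∫ T` into its three pieces
  have hintA : (∫ q : ℝ × ℝ, Dx (Dx (Dx M)) q) = 0 := integral_Dx _
  have hintB : (∫ q : ℝ × ℝ, (((p : ℝ) + 1)⁻¹ • Dx G) q) = 0 := by
    simp only [SchwartzMap.smul_apply, smul_eq_mul]
    rw [integral_const_mul, integral_Dx]
    ring
  have h1 : Integrable (fun q : ℝ × ℝ => (Δt⁻¹ • (v - u)) q) volume :=
    (Δt⁻¹ • (v - u)).integrable
  have h2 : Integrable (fun q : ℝ × ℝ => Dx (Dx (Dx M)) q) volume :=
    (Dx (Dx (Dx M))).integrable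
  have h3 : Integrable (fun q : ℝ × ℝ => (((p : ℝ) + 1)⁻¹ • Dx G) q) volume :=
    ((((p : ℝ) + 1)⁻¹) • Dx G).integrable
  have h23 : Integrable
      (fun q : ℝ × ℝ => Dx (Dx (Dx M)) q + (((p : ℝ) + 1)⁻¹ • Dx G) q) volume := h2.add h3
  have hsplit : (∫ q : ℝ × ℝ, T q)
      = (∫ q : ℝ × ℝ, (Δt⁻¹ • (v - u)) q) + ((∫ q : ℝ × ℝ, Dx (Dx (Dx M)) q)
        + (∫ q : ℝ × ℝ, (((p : ℝ) + 1)⁻¹ • Dx G) q)) := by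
    calc (∫ q : ℝ × ℝ, T q)
        = ∫ q : ℝ × ℝ, ((Δt⁻¹ • (v - u)) q
            + (Dx (Dx (Dx M)) q + (((p : ℝ) + 1)⁻¹ • Dx G) q)) := by
          congr 1
          funext q
          simp only [hT, SchwartzMap.add_apply, add_assoc]
      _ = (∫ q : ℝ × ℝ, (Δt⁻¹ • (v - u)) q)
            + ∫ q : ℝ × ℝ, (Dx (Dx (Dx M)) q + (((p : ℝ) + 1)⁻¹ • Dx G) q) :=
          integral_add h1 h23
      _ = _ := by rw [integral_add h2 h3]
  have hvu : (∫ q : ℝ × ℝ, (Δt⁻¹ • (v - u)) q) = 0 := by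
    rw [hsplit, hintA, hintB] at hintT
    linarith
  have hvu2 : (∫ q : ℝ × ℝ, (v q - u q)) = 0 := by
    have : (fun q : ℝ × ℝ => v q - u q) = fun q => Δt * ((Δt⁻¹ • (v - u)) q) := by
      funext q
      simp [SchwartzMap.smul_apply, SchwartzMap.sub_apply]
      field_simp
    rw [this, integral_const_mul, hvu, mul_zero]
  have hfinal : (∫ q : ℝ × ℝ, v q) - (∫ q : ℝ × ℝ, u q) = 0 := by
    rw [← integral_sub v.integrable u.integrable]
    exact hvu2
  linarith
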